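/- Let k ≥ j ≥ 1 be integers. For an integer i ≥ −1, define α_i^k = (−2)^{i+1} · ∏_{l=0}^{i} (2k − l)/(4k − (2l+1)), with the convention that the empty product equals 1 (so α_{−1}^k = 1). Let H_j^k be the (j+1)×(j+1) matrix whose entry in row r and column s (for r,s = 1,…,j+1) is α_{2j+1−r−s}^k; that is, the Hankel-type matrix with first row (α_{2j−1}^k, α_{2j−2}^k, …, α_{j−1}^k) and last row (α_{j−1}^k, …, α₀^k, 1). Then the determinant of H_j^k is strictly positive. -/

import Mathlib

open Finset

/-- `hankelAlpha k (i+1) = α_i^k = (−2)^{i+1} ∏_{l=0}^{i} (2k−l)/(4k−(2l+1))`,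
indexed so that `hankelAlpha k 0 = α_{−1}^k = 1` (empty product). -/
noncomputable def hankelAlpha (k t : ℕ) : ℝ :=
  (-2 : ℝ) ^ t * ∏ l ∈ Finset.range t, ((2 * k : ℝ) - l) / ((4 * k : ℝ) - (2 * l + 1))

open Real MeasureTheory intervalIntegral in
/-- Wallis integral `∫₀^π sin^n`. -/
noncomputable def wallisW (n : ℕ) : ℝ := ∫ x in (0:ℝ)..π, Real.sin x ^ n

open Real in
lemma wallisW_pos (n : ℕ) : 0 < wallisW n := by unfold wallisW; exact integral_sin_pow_pos n

open Real in
lemma wallisW_rec (n : ℕ) : wallisW (n + 2) = (n + 1) / (n + 2) * wallisW n := by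
  have := integral_sin_pow (a := 0) (b := π) n
  simpa [wallisW, Real.sin_pi] using this

open Real in
lemma hankelAlpha_eq_wallis (k t : ℕ) (ht : t ≤ 2 * k) :
    hankelAlpha k t = (-1) ^ t * wallisW (4 * k - 2 * t) / wallisW (4 * k) := by
  induction t with
  | zero =>
      simp [hankelAlpha, div_self (wallisW_pos (4 * k)).ne']
  | succ t ih =>
      have ht' : t ≤ 2 * k := by omega
      have hstep : hankelAlpha k (t + 1)
          = hankelAlpha k t * (-2 * (((2 * k : ℝ) - t) / ((4 * k : ℝ) - (2 * t + 1)))) := by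
        unfold hankelAlpha
        rw [Finset.prod_range_succ, pow_succ]
        ring
      set n := 4 * k - 2 * (t + 1) with hn
      have hn2 : 4 * k - 2 * t = n + 2 := by omega
      have hcast1 : (n : ℝ) + 1 = 4 * k - 2 * t - 1 := by
        have : (n : ℝ) = 4 * k - 2 * t - 2 := by
          rw [hn]; push_cast [Nat.cast_sub (by omega : 2 * (t+1) ≤ 4 * k)]; ring
        rw [this]; ring
      have hcast2 : (n : ℝ) + 2 = 4 * k - 2 * t := by
        have : (n : ℝ) = 4 * k - 2 * t - 2 := by
          rw [hn]; push_cast [Nat.cast_sub (by omega : 2 * (t+1) ≤ 4 * k)]; ring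
        rw [this]; ring
      have hrec : wallisW (4 * k - 2 * t) = ((4 * k : ℝ) - 2 * t - 1) / ((4 * k : ℝ) - 2 * t) * wallisW n := by
        rw [hn2, wallisW_rec n, hcast1, hcast2]
      have hd1 : ((4 * k : ℝ) - 2 * t - 1) ≠ 0 := by
        have : (2 * t + 1 : ℝ) < 4 * k := by
          have : 2 * t + 1 < 4 * k := by omega
          exact_mod_cast this
        nlinarith
      have hd2 : ((4 * k : ℝ) - 2 * t) ≠ 0 := by
        have : (2 * t : ℝ) < 4 * k := by
          have : 2 * t < 4 * k := by omega
          exact_mod_cast this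
        nlinarith
      have hd3 : ((4 * k : ℝ) - (2 * t + 1)) ≠ 0 := by
        intro h; apply hd1; linarith
      rw [hstep, ih ht', hrec]
      have hW : wallisW (4 * k) ≠ 0 := (wallisW_pos _).ne'
      field_simp
      ring

open Real MeasureTheory in
/-- A continuous function whose square is being integrated over `(0, π)`:
if it is nonzero somewhere in the open interval, the integral is positive. -/
lemma integral_sq_pos_of_ne {F : ℝ → ℝ} (hF : Continuous F) {θ₀ : ℝ}
    (h1 : θ₀ ∈ Set.Ioo (0:ℝ) π) (h2 : F θ₀ ≠ 0) :
    0 < ∫ θ in (0:ℝ)..π, F θ ^ 2 := by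
  rw [intervalIntegral.integral_of_le Real.pi_pos.le]
  rw [MeasureTheory.setIntegral_pos_iff_support_of_nonneg_ae
      (Filter.Eventually.of_forall fun θ => sq_nonneg _)
      ((hF.pow 2).integrableOn_Ioc)]
  have hopen : IsOpen ({θ : ℝ | F θ ≠ 0} ∩ Set.Ioo 0 π) :=
    (isOpen_compl_singleton.preimage hF).inter isOpen_Ioo
  have hsub : {θ : ℝ | F θ ≠ 0} ∩ Set.Ioo 0 π ⊆
      Function.support (fun θ => F θ ^ 2) ∩ Set.Ioc 0 π := by
    rintro θ ⟨hθ1, hθ2⟩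
    exact ⟨pow_ne_zero _ hθ1, Set.Ioo_subset_Ioc_self hθ2⟩
  refine lt_of_lt_of_le ?_ (measure_mono hsub)
  exact hopen.measure_pos volume ⟨θ₀, h2, h1⟩

open Real Matrix in
/-- For integers `k ≥ j ≥ 1`, the `(j+1) × (j+1)`
Hankel-type matrix `H_j^k` whose entry in (0-indexed) row `r` and column `s`
is `α_{2j−1−r−s}^k` (with `α_{−1}^k = 1`), i.e. with first row
`(α_{2j−1}^k, …, α_{j−1}^k)` and last row `(α_{j−1}^k, …, α_0^k, 1)`,
has strictly positive determinant. -/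
theorem hankel_determinant_pos
    (k j : ℕ) (hj : 1 ≤ j) (hjk : j ≤ k) :
    0 < Matrix.det
      (Matrix.of fun r s : Fin (j + 1) => hankelAlpha k (2 * j - ((r : ℕ) + (s : ℕ)))) := by
  set M : Matrix (Fin (j+1)) (Fin (j+1)) ℝ :=
    Matrix.of fun r s : Fin (j + 1) => hankelAlpha k (2 * j - ((r : ℕ) + (s : ℕ))) with hM
  -- the Gram functions
  set g : ℕ → ℝ → ℝ := fun r θ => (-1) ^ r * Real.sin θ ^ (2 * (k - j) + 2 * r) with hg
  have hgcont : ∀ r : ℕ, Continuous (g r) := by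
    intro r; exact continuous_const.mul (Real.continuous_sin.pow _)
  -- entries as integrals
  have entry : ∀ r s : Fin (j+1),
      M r s = (∫ θ in (0:ℝ)..π, g r θ * g s θ) / wallisW (4 * k) := by
    intro r s
    have hr : (r : ℕ) ≤ j := by omega
    have hs : (s : ℕ) ≤ j := by omega
    have ht : 2 * j - ((r : ℕ) + (s : ℕ)) ≤ 2 * k := by omega
    have hexp : 4 * k - 2 * (2 * j - ((r : ℕ) + (s : ℕ)))
        = (2 * (k - j) + 2 * (r : ℕ)) + (2 * (k - j) + 2 * (s : ℕ)) := by omega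
    have hint : (∫ θ in (0:ℝ)..π, g r θ * g s θ)
        = (-1) ^ ((r : ℕ) + (s : ℕ)) *
          wallisW ((2 * (k - j) + 2 * (r : ℕ)) + (2 * (k - j) + 2 * (s : ℕ))) := by
      unfold wallisW
      rw [← intervalIntegral.integral_const_mul]
      congr 1
      funext θ
      simp only [hg]
      rw [pow_add ((-1:ℝ)), pow_add (Real.sin θ)]
      ring
    have hsign : ((-1 : ℝ)) ^ (2 * j - ((r : ℕ) + (s : ℕ))) = (-1) ^ ((r : ℕ) + (s : ℕ)) := by
      have h1 : ((-1 : ℝ)) ^ (2 * j - ((r : ℕ) + (s : ℕ))) * (-1) ^ ((r : ℕ) + (s : ℕ)) = 1 := by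
        rw [← pow_add, (by omega : 2 * j - ((r : ℕ) + (s : ℕ)) + ((r : ℕ) + (s : ℕ)) = 2 * j)]
        exact Even.neg_one_pow ⟨j, by ring⟩
      have h2 : ((-1 : ℝ)) ^ ((r : ℕ) + (s : ℕ)) * (-1) ^ ((r : ℕ) + (s : ℕ)) = 1 := by
        rw [← pow_add]; exact Even.neg_one_pow ⟨(r : ℕ) + (s : ℕ), by ring⟩
      calc ((-1 : ℝ)) ^ (2 * j - ((r : ℕ) + (s : ℕ)))
          = ((-1 : ℝ)) ^ (2 * j - ((r : ℕ) + (s : ℕ))) *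
            ((-1) ^ ((r : ℕ) + (s : ℕ)) * (-1) ^ ((r : ℕ) + (s : ℕ))) := by rw [h2, mul_one]
        _ = (((-1 : ℝ)) ^ (2 * j - ((r : ℕ) + (s : ℕ))) * (-1) ^ ((r : ℕ) + (s : ℕ))) *
            (-1) ^ ((r : ℕ) + (s : ℕ)) := by ring
        _ = (-1) ^ ((r : ℕ) + (s : ℕ)) := by rw [h1, one_mul]
    show hankelAlpha k (2 * j - ((r : ℕ) + (s : ℕ))) = _
    rw [hankelAlpha_eq_wallis k _ ht, hint, hexp, hsign]
  -- positive definiteness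
  refine Matrix.PosDef.det_pos ?_
  rw [Matrix.posDef_iff_dotProduct_mulVec]
  constructor
  · show M.conjTranspose = M
    ext r s
    simp only [Matrix.conjTranspose_apply, hM, Matrix.of_apply, star_trivial]
    congr 2
    omega
  · intro x hx
    set F : ℝ → ℝ := fun θ => ∑ r : Fin (j+1), x r * g r θ with hF
    have hFcont : Continuous F := by
      apply continuous_finset_sum
      intro r _
      exact continuous_const.mul (hgcont r)
    -- the quadratic form as an integral
    have hterm : ∀ r s : Fin (j+1),
        (∫ θ in (0:ℝ)..π, (x r * g r θ) * (x s * g s θ))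
          = x r * x s * ∫ θ in (0:ℝ)..π, g r θ * g s θ := by
      intro r s
      rw [← intervalIntegral.integral_const_mul]
      congr 1; funext θ; ring
    have hsq : (∫ θ in (0:ℝ)..π, F θ ^ 2)
        = ∑ r : Fin (j+1), ∑ s : Fin (j+1), x r * x s * ∫ θ in (0:ℝ)..π, g r θ * g s θ := by
      have h1 : (∫ θ in (0:ℝ)..π, F θ ^ 2)
          = ∫ θ in (0:ℝ)..π, ∑ r : Fin (j+1), ∑ s : Fin (j+1),
              (x r * g r θ) * (x s * g s θ) := by
        congr 1; funext θ
        rw [sq, hF]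
        rw [Finset.sum_mul_sum]
      rw [h1]
      rw [intervalIntegral.integral_finset_sum]
      · refine Finset.sum_congr rfl fun r _ => ?_
        rw [intervalIntegral.integral_finset_sum]
        · exact Finset.sum_congr rfl fun s _ => hterm r s
        · intro s _
          exact ((continuous_const.mul (hgcont r)).mul
            (continuous_const.mul (hgcont s))).intervalIntegrable _ _
      · intro r _
        apply Continuous.intervalIntegrable
        apply continuous_finset_sum
        intro s _
        exact (continuous_const.mul (hgcont r)).mul (continuous_const.mul (hgcont s))
    have hquad : dotProduct (star x) (M.mulVec x)
        = (∫ θ in (0:ℝ)..π, F θ ^ 2) / wallisW (4 * k) := by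
      rw [hsq]
      simp only [dotProduct, Matrix.mulVec, star_trivial, Pi.star_apply]
      rw [Finset.sum_div]
      refine Finset.sum_congr rfl fun r _ => ?_
      rw [Finset.mul_sum, Finset.sum_div]
      refine Finset.sum_congr rfl fun s _ => ?_
      rw [entry r s]
      field_simp
    rw [hquad]
    -- find a point where F is nonzero
    obtain ⟨r₀, hr₀⟩ : ∃ r : Fin (j+1), x r ≠ 0 := by
      by_contra h
      push_neg at h
      exact hx (funext h)
    set P : Polynomial ℝ :=
      ∑ r : Fin (j+1), Polynomial.C (x r * (-1) ^ (r : ℕ)) * Polynomial.X ^ (r : ℕ) with hP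
    have hPcoeff : ∀ r : Fin (j+1), P.coeff (r : ℕ) = x r * (-1) ^ (r : ℕ) := by
      intro r
      rw [hP, Polynomial.finset_sum_coeff]
      rw [Finset.sum_eq_single r]
      · rw [Polynomial.coeff_C_mul, Polynomial.coeff_X_pow]
        simp
      · intro s _ hsne
        have hne : ¬ ((s : ℕ) = (r : ℕ)) := fun h => hsne (Fin.ext h)
        rw [Polynomial.coeff_C_mul, Polynomial.coeff_X_pow]
        simp only [mul_ite, mul_one, mul_zero, ite_eq_right_iff]
        exact fun h => absurd h.symm hne
      · simp
    have hPne : P ≠ 0 := by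
      intro h
      apply hr₀
      have := hPcoeff r₀
      rw [h] at this
      simp only [Polynomial.coeff_zero] at this
      rcases mul_eq_zero.mp this.symm with h' | h'
      · exact h'
      · exact absurd h' (pow_ne_zero _ (by norm_num))
    have hFeval : ∀ θ : ℝ, F θ = Real.sin θ ^ (2 * (k - j)) * Polynomial.eval (Real.sin θ ^ 2) P := by
      intro θ
      rw [hP, Polynomial.eval_finset_sum, Finset.mul_sum, hF]
      refine Finset.sum_congr rfl fun r _ => ?_
      simp only [hg, Polynomial.eval_mul, Polynomial.eval_C, Polynomial.eval_pow,
        Polynomial.eval_X]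
      rw [← pow_mul, pow_add]
      ring
    have hinj : Set.InjOn (fun θ => Real.sin θ ^ 2) (Set.Ioo 0 (π / 2)) := by
      intro a ha b hb hab
      have hpi := Real.pi_pos
      have hpa : 0 < Real.sin a :=
        Real.sin_pos_of_pos_of_lt_pi ha.1 (by linarith [ha.2])
      have hpb : 0 < Real.sin b :=
        Real.sin_pos_of_pos_of_lt_pi hb.1 (by linarith [hb.2])
      have hsab : Real.sin a = Real.sin b := by
        simp only at hab
        nlinarith
      exact Real.injOn_sin ⟨by linarith [ha.1], le_of_lt ha.2⟩
        ⟨by linarith [hb.1], le_of_lt hb.2⟩ hsab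
    have hex : ∃ θ₀ ∈ Set.Ioo (0:ℝ) (π / 2), Polynomial.eval (Real.sin θ₀ ^ 2) P ≠ 0 := by
      by_contra h
      push_neg at h
      apply hPne
      apply Polynomial.eq_zero_of_infinite_isRoot
      refine Set.Infinite.mono ?_
        ((Set.infinite_image_iff hinj).2 (Set.Ioo_infinite (by positivity)))
      rintro u ⟨θ, hθ, rfl⟩
      exact h θ hθ
    obtain ⟨θ₀, hθ₀, hPθ₀⟩ := hex
    have hpi := Real.pi_pos
    have hθ₀' : θ₀ ∈ Set.Ioo (0:ℝ) π := ⟨hθ₀.1, by linarith [hθ₀.2]⟩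
    have hsθ₀ : 0 < Real.sin θ₀ := Real.sin_pos_of_pos_of_lt_pi hθ₀'.1 hθ₀'.2
    have hFθ₀ : F θ₀ ≠ 0 := by
      rw [hFeval θ₀]
      exact mul_ne_zero (pow_ne_zero _ hsθ₀.ne') hPθ₀
    exact div_pos (integral_sq_pos_of_ne hFcont hθ₀' hFθ₀) (wallisW_pos _)
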